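/- Let F be a Borel-amenable set of reductions and let D ⊆ D' be sets in Δ_F. For every A ⊆ ℝ, if A ∩ D' ≠ ℝ then A ∩ D ≤_F A ∩ D'. In particular, if D ∈ Δ_F and A ≠ ℝ then A ∩ D ≤_F A. -/

import Mathlib

open scoped Classical

/-- The standard metric on Baire space: `d x y = (1/2)^m` where `m` is least
with `x m ≠ y m`, and `0` if `x = y`. -/
noncomputable def bd (x y : ℕ → ℕ) : ℝ :=
  if h : x = y then 0 else (1 / 2 : ℝ) ^ (Nat.find (Function.ne_iff.mp h))

/-- `f` is Lipschitz with constant `C` with respect to `bd`. -/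
def LipWith (C : ℝ) (f : (ℕ → ℕ) → ℕ → ℕ) : Prop :=
  ∀ x y, bd (f x) (f y) ≤ C * bd x y

/-- The set of all Lipschitz functions (of any constant `2^k`, `k ∈ ℤ`). -/
def Lip : Set ((ℕ → ℕ) → ℕ → ℕ) := {f | ∃ k : ℤ, LipWith ((2 : ℝ) ^ k) f}

/-- `A` is `F`-reducible to `B`. -/
def Red (F : Set ((ℕ → ℕ) → (ℕ → ℕ))) (A B : Set (ℕ → ℕ)) : Prop :=
  ∃ f ∈ F, A = f ⁻¹' B

/-- The basic clopen set `N_⟨0⟩`. -/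
def N0 : Set (ℕ → ℕ) := {x | x 0 = 0}

/-- The characteristic set of `F`. -/
def Delta (F : Set ((ℕ → ℕ) → (ℕ → ℕ))) : Set (Set (ℕ → ℕ)) :=
  {A | Red F A N0}

/-- `F` is a Borel-amenable set of reductions: a set of Borel functions on Baire
space, closed under composition, containing all Lipschitz functions, and closed
under piecewise combinations along `Δ_F`-partitions. -/
def BorelAmenable (F : Set ((ℕ → ℕ) → (ℕ → ℕ))) : Prop :=
  (∀ f ∈ F, ∀ g ∈ F, f ∘ g ∈ F) ∧
  (∀ f ∈ F, Measurable f) ∧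
  Lip ⊆ F ∧
  (∀ (D : ℕ → Set (ℕ → ℕ)) (fs : ℕ → (ℕ → ℕ) → ℕ → ℕ) (g : (ℕ → ℕ) → ℕ → ℕ),
    (∀ n, D n ∈ Delta F) → Pairwise (Function.onFun Disjoint D) → (⋃ n, D n) = Set.univ →
    (∀ n, fs n ∈ F) → (∀ n, ∀ x ∈ D n, g x = fs n x) → g ∈ F)

lemma bd_nonneg (x y : ℕ → ℕ) : 0 ≤ bd x y := by
  unfold bd; split
  · exact le_refl 0
  · positivity

lemma const_mem_Lip (z : ℕ → ℕ) : (fun _ : ℕ → ℕ => z) ∈ Lip := by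
  refine ⟨0, fun x y => ?_⟩
  simp only [bd, dif_pos rfl, zpow_zero, one_mul]
  exact bd_nonneg x y

lemma id_mem_Lip : (fun x : ℕ → ℕ => x) ∈ Lip := by
  refine ⟨0, fun x y => ?_⟩
  simp only [zpow_zero, one_mul]
  exact le_refl _

/-- the "flip first coordinate to 0 iff nonzero" function -/
noncomputable def sw (x : ℕ → ℕ) : ℕ → ℕ :=
  fun n => if n = 0 then (if x 0 = 0 then 1 else 0) else x n

lemma sw_mem_Lip : sw ∈ Lip := by
  refine ⟨0, fun x y => ?_⟩
  simp only [zpow_zero, one_mul]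
  unfold bd
  split
  · exact bd_nonneg x y
  · rename_i h
    have hxy : x ≠ y := by
      intro he; exact h (by rw [he])
    rw [dif_neg hxy]
    apply pow_le_pow_of_le_one (by norm_num) (by norm_num)
    rw [Nat.le_find_iff]
    intro m hm hne
    have hlt : ∀ k < Nat.find (Function.ne_iff.mp hxy), x k = y k := fun k hk =>
      not_not.mp (Nat.find_min (Function.ne_iff.mp hxy) hk)
    apply hne
    unfold sw
    rcases Nat.eq_zero_or_pos m with rfl | hpos
    · simp [hlt 0 hm]
    · simp [Nat.pos_iff_ne_zero.mp hpos, hlt m hm]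

lemma empty_mem_Delta {F : Set ((ℕ → ℕ) → (ℕ → ℕ))} (hF : BorelAmenable F) :
    (∅ : Set (ℕ → ℕ)) ∈ Delta F := by
  refine ⟨fun _ => fun _ => 1, hF.2.2.1 (const_mem_Lip _), ?_⟩
  ext x; simp [N0]

lemma compl_mem_Delta {F : Set ((ℕ → ℕ) → (ℕ → ℕ))} (hF : BorelAmenable F)
    {D : Set (ℕ → ℕ)} (hD : D ∈ Delta F) : Dᶜ ∈ Delta F := by
  obtain ⟨f, hf, hfD⟩ := hD
  refine ⟨sw ∘ f, hF.1 _ (hF.2.2.1 sw_mem_Lip) _ hf, ?_⟩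
  ext x
  have : x ∈ D ↔ f x 0 = 0 := by rw [hfD]; rfl
  simp only [Set.mem_compl_iff, this, Set.mem_preimage, Function.comp_apply, N0,
    Set.mem_setOf_eq, sw]
  by_cases h : f x 0 = 0 <;> simp [h]

/-- the key piecewise function is in F -/
lemma piece_mem {F : Set ((ℕ → ℕ) → (ℕ → ℕ))} (hF : BorelAmenable F)
    {D : Set (ℕ → ℕ)} (hD : D ∈ Delta F) (z : ℕ → ℕ) :
    (fun x => if x ∈ D then x else z) ∈ F := by
  apply hF.2.2.2 (fun n => if n = 0 then D else if n = 1 then Dᶜ else ∅)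
    (fun n => if n = 0 then (fun x => x) else (fun _ => z))
  · intro n
    rcases n with _ | n
    · simpa using hD
    · rcases n with _ | n
      · simpa using compl_mem_Delta hF hD
      · simpa using empty_mem_Delta hF
  · intro i j hij
    simp only [Function.onFun]
    rcases i with _ | i <;> rcases j with _ | j
    · exact absurd rfl hij
    · rcases j with _ | j
      · simp [disjoint_compl_right]
      · simp
    · rcases i with _ | i
      · simp [disjoint_compl_left]
      · simp
    · rcases i with _ | i <;> rcases j with _ | j <;> simp
      · exact absurd rfl hij
  · ext x
    simp only [Set.mem_iUnion, Set.mem_univ, iff_true]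
    by_cases h : x ∈ D
    · exact ⟨0, by simpa using h⟩
    · exact ⟨1, by simpa using h⟩
  · intro n
    rcases n with _ | n
    · simpa using hF.2.2.1 id_mem_Lip
    · simpa using hF.2.2.1 (const_mem_Lip z)
  · intro n x hx
    rcases n with _ | n
    · have hxD : x ∈ D := by simpa using hx
      simp [hxD]
    · rcases n with _ | n
      · have : x ∉ D := by simpa using hx
        simp [this]
      · simp at hx

lemma key {F : Set ((ℕ → ℕ) → (ℕ → ℕ))} (hF : BorelAmenable F)
    {D : Set (ℕ → ℕ)} (hD : D ∈ Delta F) (A B : Set (ℕ → ℕ))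
    (hB : ∀ x ∈ D, (x ∈ B ↔ x ∈ A)) (hBne : B ≠ Set.univ) :
    Red F (A ∩ D) B := by
  obtain ⟨z, hz⟩ : ∃ z, z ∉ B := by
    by_contra h
    push_neg at h
    exact hBne (Set.eq_univ_of_forall h)
  refine ⟨fun x => if x ∈ D then x else z, piece_mem hF hD z, ?_⟩
  ext x
  by_cases h : x ∈ D
  · simp [Set.mem_preimage, h, hB x h, and_comm]
  · simp [Set.mem_preimage, h, hz]

theorem stmt9 (F : Set ((ℕ → ℕ) → (ℕ → ℕ))) (hF : BorelAmenable F)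
    (D D' : Set (ℕ → ℕ)) (hD : D ∈ Delta F) (hD' : D' ∈ Delta F)
    (hDD' : D ⊆ D') :
    (∀ A : Set (ℕ → ℕ), A ∩ D' ≠ Set.univ → Red F (A ∩ D) (A ∩ D')) ∧
    (∀ A : Set (ℕ → ℕ), A ≠ Set.univ → Red F (A ∩ D) A) := by
  constructor
  · intro A hA
    exact key hF hD A (A ∩ D')
      (fun x hx => ⟨fun h => h.1, fun h => ⟨h, hDD' hx⟩⟩) hA
  · intro A hA
    exact key hF hD A A (fun x _ => Iff.rfl) hA
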